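/- Block independence is preserved under i.i.d. products: if p_{XYZ} is uniformly block independent (UBI), then the n-fold product distribution p_{XYZ}^{⊗n} on 𝒳ⁿ × 𝒴ⁿ × 𝒵ⁿ is also uniformly block independent, with maximal conditional common function equal to the n-tuple of blockwise common functions, and H(J^{(n)}|Zⁿ) = n·H(J_{XY|Z}|Z). -/

import Mathlib

open scoped BigOperators
open Real

/-- Entropy (in bits) of the pushforward of a finitely supported measure `P` along `f`. -/
noncomputable def Hof {Ω W : Type*} [Fintype Ω] [DecidableEq W] (P : Ω → ℝ) (f : Ω → W) : ℝ :=
  ∑ w ∈ Finset.image f Finset.univ,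
    -((∑ ω ∈ Finset.univ.filter fun ω => f ω = w, P ω) *
        Real.logb 2 (∑ ω ∈ Finset.univ.filter fun ω => f ω = w, P ω))

/-- `f` and `g` form a common function of a bipartite distribution `q`: they agree on
the support of `q`. -/
def IsCommonFn {X Y W : Type*} (q : X → Y → ℝ) (f : X → W) (g : Y → W) : Prop :=
  ∀ x y, 0 < q x y → f x = g y

/-- `(f, g)` is a *maximal* common function of `q`: any other common function is,
on the support, a function of it. -/
def IsMaxCommonFn {X Y W : Type*} (q : X → Y → ℝ) (f : X → W) (g : Y → W) : Prop :=
  IsCommonFn q f g ∧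
    ∀ (f' : X → ℕ) (g' : Y → ℕ), IsCommonFn q f' g' →
      ∃ F : W → ℕ, ∀ x y, 0 < q x y → f' x = F (f x)

/-- `p_{XYZ}` is uniformly block independent (UBI) with respect to the maximal conditional
common function `(jX, jY)`: `(jX z, jY z)` is a maximal common function of `p_{XY|Z=z}`
for each `z` in the support, `I(X:Y|J,Z) = 0`, and `H(J|X) = H(J|Y) = 0`. -/
def IsUBI {X Y Z W : Type*} [Fintype X] [Fintype Y] [Fintype Z]
    [DecidableEq X] [DecidableEq Y] [DecidableEq Z] [DecidableEq W]
    (p : X → Y → Z → ℝ) (jX : Z → X → W) (jY : Z → Y → W) : Prop :=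
  (∀ z, 0 < (∑ x, ∑ y, p x y z) →
      IsMaxCommonFn (fun x y => p x y z) (jX z) (jY z)) ∧
  -- I(X:Y | J,Z) = 0
  (Hof (fun ω : X × Y × Z => p ω.1 ω.2.1 ω.2.2)
        (fun ω => (ω.1, jX ω.2.2 ω.1, ω.2.2)) +
      Hof (fun ω : X × Y × Z => p ω.1 ω.2.1 ω.2.2)
        (fun ω => (ω.2.1, jX ω.2.2 ω.1, ω.2.2)) -
      Hof (fun ω : X × Y × Z => p ω.1 ω.2.1 ω.2.2)
        (fun ω => (ω.1, ω.2.1, jX ω.2.2 ω.1, ω.2.2)) -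
      Hof (fun ω : X × Y × Z => p ω.1 ω.2.1 ω.2.2)
        (fun ω => (jX ω.2.2 ω.1, ω.2.2)) = 0) ∧
  -- H(J|X) = 0
  (Hof (fun ω : X × Y × Z => p ω.1 ω.2.1 ω.2.2) (fun ω => (jX ω.2.2 ω.1, ω.1)) -
      Hof (fun ω : X × Y × Z => p ω.1 ω.2.1 ω.2.2) (fun ω => ω.1) = 0) ∧
  -- H(J|Y) = 0
  (Hof (fun ω : X × Y × Z => p ω.1 ω.2.1 ω.2.2) (fun ω => (jY ω.2.2 ω.2.1, ω.2.1)) -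
      Hof (fun ω : X × Y × Z => p ω.1 ω.2.1 ω.2.2) (fun ω => ω.2.1) = 0)

/-! ### Auxiliary entropy lemmas -/

section HofLemmas

lemma Hof_comp_equiv {Ω Ω' W : Type*} [Fintype Ω] [Fintype Ω'] [DecidableEq W]
    (P : Ω → ℝ) (f : Ω → W) (e : Ω' ≃ Ω) :
    Hof (fun ω' => P (e ω')) (fun ω' => f (e ω')) = Hof P f := by
  unfold Hof
  have himg : Finset.image (fun ω' => f (e ω')) Finset.univ = Finset.image f Finset.univ := by
    ext w
    simp only [Finset.mem_image, Finset.mem_univ, true_and]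
    constructor
    · rintro ⟨a, ha⟩; exact ⟨e a, ha⟩
    · rintro ⟨a, ha⟩; exact ⟨e.symm a, by simpa using ha⟩
  rw [himg]
  refine Finset.sum_congr rfl fun w _ => ?_
  have : (∑ ω' ∈ Finset.univ.filter fun ω' => f (e ω') = w, P (e ω'))
      = ∑ ω ∈ Finset.univ.filter fun ω => f ω = w, P ω := by
    refine Finset.sum_equiv e ?_ ?_ <;> simp
  rw [this]

lemma Hof_comp_inj {Ω W V : Type*} [Fintype Ω] [DecidableEq W] [DecidableEq V]
    (P : Ω → ℝ) (f : Ω → W) (T : W → V) (hT : Function.Injective T) :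
    Hof P (fun ω => T (f ω)) = Hof P f := by
  unfold Hof
  have himg : Finset.image (fun ω => T (f ω)) Finset.univ
      = Finset.image T (Finset.image f Finset.univ) := by
    rw [Finset.image_image]; rfl
  rw [himg, Finset.sum_image (fun a _ b _ h => hT h)]
  refine Finset.sum_congr rfl fun w _ => ?_
  have : (Finset.univ.filter fun ω => T (f ω) = T w) = Finset.univ.filter fun ω => f ω = w := by
    ext ω; simp [hT.eq_iff]
  rw [this]

lemma Hof_pi {Ω W : Type*} [Fintype Ω] [DecidableEq W] (P : Ω → ℝ)
    (h0 : ∀ ω, 0 ≤ P ω) (h1 : ∑ ω, P ω = 1) (f : Ω → W) (n : ℕ) :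
    Hof (fun ν : Fin n → Ω => ∏ k, P (ν k)) (fun ν k => f (ν k)) = n * Hof P f := by
  set S : Finset W := Finset.image f Finset.univ with hS
  set Q : W → ℝ := fun w => ∑ ω ∈ Finset.univ.filter fun ω => f ω = w, P ω with hQ
  have hQ0 : ∀ w, 0 ≤ Q w := fun w => Finset.sum_nonneg fun ω _ => h0 ω
  have hQ1 : ∑ w ∈ S, Q w = 1 := by
    rw [hS, hQ]
    rw [Finset.sum_fiberwise_of_maps_to (fun ω _ => Finset.mem_image_of_mem f (Finset.mem_univ ω))]
    exact h1
  -- the image of the coordinatewise map is the pi-set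
  have himg : Finset.image (fun ν : Fin n → Ω => fun k => f (ν k)) Finset.univ
      = Fintype.piFinset fun _ : Fin n => S := by
    ext w
    simp only [Finset.mem_image, Finset.mem_univ, true_and, Fintype.mem_piFinset, hS]
    constructor
    · rintro ⟨ν, rfl⟩ k; exact ⟨ν k, rfl⟩
    · intro hw
      choose ν hν using hw
      exact ⟨ν, funext hν⟩
  -- fiber sums factorize
  have hfib : ∀ w : Fin n → W,
      (∑ ν ∈ Finset.univ.filter fun ν : Fin n → Ω => (fun k => f (ν k)) = w, ∏ k, P (ν k))
        = ∏ k, Q (w k) := by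
    intro w
    rw [hQ]
    rw [Finset.prod_univ_sum (fun k => Finset.univ.filter fun ω => f ω = w k) fun _ ω => P ω]
    congr 1
    ext ν
    simp [Fintype.mem_piFinset, funext_iff]
  unfold Hof
  rw [himg]
  calc (∑ w ∈ Fintype.piFinset fun _ : Fin n => S,
        -((∑ ν ∈ Finset.univ.filter fun ν : Fin n → Ω => (fun k => f (ν k)) = w, ∏ k, P (ν k)) *
          Real.logb 2 (∑ ν ∈ Finset.univ.filter fun ν : Fin n → Ω => (fun k => f (ν k)) = w, ∏ k, P (ν k))))
      = ∑ w ∈ Fintype.piFinset fun _ : Fin n => S,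
        -((∏ k, Q (w k)) * Real.logb 2 (∏ k, Q (w k))) := by
        refine Finset.sum_congr rfl fun w _ => ?_; rw [hfib w]
    _ = ∑ w ∈ Fintype.piFinset fun _ : Fin n => S,
        -(∑ k, (Q (w k) * Real.logb 2 (Q (w k))) * ∏ j ∈ Finset.univ.erase k, Q (w j)) := by
        refine Finset.sum_congr rfl fun w _ => ?_
        congr 1
        by_cases hz : ∀ k, Q (w k) ≠ 0
        · rw [Real.logb_prod _ _ fun k _ => hz k, Finset.mul_sum]
          refine Finset.sum_congr rfl fun k _ => ?_
          rw [← Finset.mul_prod_erase Finset.univ _ (Finset.mem_univ k)]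
          ring
        · push_neg at hz
          obtain ⟨k0, hk0⟩ := hz
          rw [Finset.prod_eq_zero (Finset.mem_univ k0) hk0, zero_mul]
          refine (Finset.sum_eq_zero fun k _ => ?_).symm
          by_cases hkk : k = k0
          · subst hkk; rw [hk0]; simp
          · rw [Finset.prod_eq_zero (Finset.mem_erase.mpr ⟨Ne.symm hkk, Finset.mem_univ k0⟩) hk0]
            ring
    _ = ∑ k : Fin n, ∑ w ∈ Fintype.piFinset fun _ : Fin n => S,
        -((Q (w k) * Real.logb 2 (Q (w k))) * ∏ j ∈ Finset.univ.erase k, Q (w j)) := by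
        simp only [← Finset.sum_neg_distrib]
        exact Finset.sum_comm
    _ = ∑ k : Fin n, -∑ v ∈ S, Q v * Real.logb 2 (Q v) := by
        refine Finset.sum_congr rfl fun k _ => ?_
        rw [Finset.sum_neg_distrib]
        congr 1
        have : ∀ w : Fin n → W, (Q (w k) * Real.logb 2 (Q (w k))) * ∏ j ∈ Finset.univ.erase k, Q (w j)
            = ∏ j, (fun j v => if j = k then Q v * Real.logb 2 (Q v) else Q v) j (w j) := by
          intro w
          rw [← Finset.mul_prod_erase Finset.univ _ (Finset.mem_univ k)]
          simp only [if_pos rfl]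
          congr 1
          exact Finset.prod_congr rfl fun j hj => by
            rw [if_neg (Finset.mem_erase.mp hj).1]
        rw [Finset.sum_congr rfl fun w _ => this w]
        rw [← Finset.prod_univ_sum (fun _ : Fin n => S)
          (fun j v => if j = k then Q v * Real.logb 2 (Q v) else Q v)]
        rw [Finset.prod_eq_single k ?_ ?_]
        · simp
        · intro j _ hj
          simp only [if_neg hj]; exact hQ1
        · intro h; exact absurd (Finset.mem_univ k) h
    _ = n * Hof P f := by
        have hH : Hof P f = ∑ v ∈ S, -(Q v * Real.logb 2 (Q v)) := rfl
        rw [hH, Finset.sum_const, Finset.card_univ, Fintype.card_fin, nsmul_eq_mul,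
          Finset.sum_neg_distrib, mul_neg]

/-- transpose equivalence between triples of tuples and tuples of triples -/
def tripleEquiv (X Y Z : Type*) (n : ℕ) :
    (Fin n → X × Y × Z) ≃ (Fin n → X) × (Fin n → Y) × (Fin n → Z) where
  toFun ν := (fun k => (ν k).1, fun k => (ν k).2.1, fun k => (ν k).2.2)
  invFun ω := fun k => (ω.1 k, ω.2.1 k, ω.2.2 k)
  left_inv ν := by funext k; rfl
  right_inv ω := rfl

lemma Hof_key {X Y Z W V : Type*} [Fintype X] [Fintype Y] [Fintype Z]
    [DecidableEq W] [DecidableEq V]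
    (p : X → Y → Z → ℝ) (h0 : ∀ x y z, 0 ≤ p x y z)
    (h1 : ∑ x, ∑ y, ∑ z, p x y z = 1) (n : ℕ)
    (g : X × Y × Z → W) (T : (Fin n → W) → V) (hT : Function.Injective T)
    (f : (Fin n → X) × (Fin n → Y) × (Fin n → Z) → V)
    (hf : ∀ ω, f ω = T (fun k => g (ω.1 k, ω.2.1 k, ω.2.2 k))) :
    Hof (fun ω : (Fin n → X) × (Fin n → Y) × (Fin n → Z) =>
        ∏ k, p (ω.1 k) (ω.2.1 k) (ω.2.2 k)) f
      = n * Hof (fun ω : X × Y × Z => p ω.1 ω.2.1 ω.2.2) g := by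
  rw [← Hof_comp_equiv (fun ω : (Fin n → X) × (Fin n → Y) × (Fin n → Z) =>
        ∏ k, p (ω.1 k) (ω.2.1 k) (ω.2.2 k)) f (tripleEquiv X Y Z n)]
  have h1' : ∑ ω : X × Y × Z, p ω.1 ω.2.1 ω.2.2 = 1 := by
    rw [← h1]; rw [Fintype.sum_prod_type]
    exact Finset.sum_congr rfl fun x _ => Fintype.sum_prod_type _
  have hfe : (fun ν : Fin n → X × Y × Z => f (tripleEquiv X Y Z n ν))
      = fun ν => T (fun k => g (ν k)) := by
    funext ν; rw [hf]; rfl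
  rw [hfe]
  have hPe : (fun ν : Fin n → X × Y × Z =>
      (fun ω : (Fin n → X) × (Fin n → Y) × (Fin n → Z) =>
        ∏ k, p (ω.1 k) (ω.2.1 k) (ω.2.2 k)) (tripleEquiv X Y Z n ν))
      = fun ν => ∏ k, (fun ω : X × Y × Z => p ω.1 ω.2.1 ω.2.2) (ν k) := rfl
  rw [hPe, Hof_comp_inj _ _ T hT,
    Hof_pi (fun ω : X × Y × Z => p ω.1 ω.2.1 ω.2.2) (fun ω => h0 ω.1 ω.2.1 ω.2.2) h1' g n]

lemma transpose2_inj {A B : Type*} {n : ℕ} :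
    Function.Injective (fun h : Fin n → A × B =>
      ((fun k => (h k).1, fun k => (h k).2) : (Fin n → A) × (Fin n → B))) := by
  intro h h' he
  funext k
  have h1 := congrFun (congrArg Prod.fst he) k
  have h2 := congrFun (congrArg Prod.snd he) k
  exact Prod.ext h1 h2

lemma transpose3_inj {A B C : Type*} {n : ℕ} :
    Function.Injective (fun h : Fin n → A × B × C =>
      ((fun k => (h k).1, fun k => (h k).2.1, fun k => (h k).2.2) :
        (Fin n → A) × (Fin n → B) × (Fin n → C))) := by
  intro h h' he
  funext k
  have h1 := congrFun (congrArg (fun t : (Fin n → A) × (Fin n → B) × (Fin n → C) => t.1) he) k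
  have h2 := congrFun (congrArg (fun t : (Fin n → A) × (Fin n → B) × (Fin n → C) => t.2.1) he) k
  have h3 := congrFun (congrArg (fun t : (Fin n → A) × (Fin n → B) × (Fin n → C) => t.2.2) he) k
  exact Prod.ext h1 (Prod.ext h2 h3)

lemma transpose4_inj {A B C D : Type*} {n : ℕ} :
    Function.Injective (fun h : Fin n → A × B × C × D =>
      ((fun k => (h k).1, fun k => (h k).2.1, fun k => (h k).2.2.1, fun k => (h k).2.2.2) :
        (Fin n → A) × (Fin n → B) × (Fin n → C) × (Fin n → D))) := by
  intro h h' he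
  funext k
  have h1 := congrFun (congrArg (fun t : (Fin n → A) × (Fin n → B) × (Fin n → C) × (Fin n → D) => t.1) he) k
  have h2 := congrFun (congrArg (fun t : (Fin n → A) × (Fin n → B) × (Fin n → C) × (Fin n → D) => t.2.1) he) k
  have h3 := congrFun (congrArg (fun t : (Fin n → A) × (Fin n → B) × (Fin n → C) × (Fin n → D) => t.2.2.1) he) k
  have h4 := congrFun (congrArg (fun t : (Fin n → A) × (Fin n → B) × (Fin n → C) × (Fin n → D) => t.2.2.2) he) k
  exact Prod.ext h1 (Prod.ext h2 (Prod.ext h3 h4))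

end HofLemmas

/-! ### Connectivity in the bipartite support graph -/

/-- one step in the bipartite support graph of `q` -/
def ubiStep {X Y : Type*} (q : X → Y → ℝ) (a a' : X) : Prop :=
  ∃ b, 0 < q a b ∧ 0 < q a' b

/-- reachability in the bipartite support graph of `q` -/
def ubiReach {X Y : Type*} (q : X → Y → ℝ) : X → X → Prop :=
  Relation.ReflTransGen (ubiStep q)

lemma ubiReach_symm {X Y : Type*} {q : X → Y → ℝ} {a a' : X}
    (h : ubiReach q a a') : ubiReach q a' a :=
  (@Relation.ReflTransGen.stdSymm _ (ubiStep q) ⟨fun _ _ ⟨b, h1, h2⟩ => ⟨b, h2, h1⟩⟩).symm _ _ h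

lemma ubiReach_trans {X Y : Type*} {q : X → Y → ℝ} {a a' a'' : X}
    (h : ubiReach q a a') (h' : ubiReach q a' a'') : ubiReach q a a'' :=
  Relation.ReflTransGen.trans h h'

open Classical in
/-- component code of `a` in the support graph -/
noncomputable def ubiComp {X Y : Type*} [Fintype X] [DecidableEq X] (q : X → Y → ℝ) (a : X) : ℕ :=
  (Fintype.equivFin (Finset X) (Finset.univ.filter fun a' => ubiReach q a a') : ℕ)

lemma ubiComp_eq {X Y : Type*} [Fintype X] [DecidableEq X] {q : X → Y → ℝ} {a a' : X}
    (h : ubiReach q a a') : ubiComp q a = ubiComp q a' := by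
  classical
  unfold ubiComp
  congr 2
  ext t
  simp only [Finset.mem_filter, Finset.mem_univ, true_and]
  exact ⟨fun ht => ubiReach_trans (ubiReach_symm h) ht, fun ht => ubiReach_trans h ht⟩

lemma ubiReach_of_comp_eq {X Y : Type*} [Fintype X] [DecidableEq X] {q : X → Y → ℝ} {a a' : X}
    (h : ubiComp q a = ubiComp q a') : ubiReach q a a' := by
  classical
  unfold ubiComp at h
  have h2 := (Fintype.equivFin (Finset X)).injective (Fin.val_injective h)
  have : a' ∈ Finset.univ.filter fun t => ubiReach q a' t := by
    exact Finset.mem_filter.mpr ⟨Finset.mem_univ _, Relation.ReflTransGen.refl⟩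
  rw [← h2] at this
  simpa using this

/-- within a block of a maximal common function, the support graph is connected -/
lemma ubiReach_of_max {X Y W : Type*} [Fintype X] [DecidableEq X]
    {q : X → Y → ℝ} {jx : X → W} {jy : Y → W}
    (hmax : IsMaxCommonFn q jx jy)
    {a b a' b'} (ha : 0 < q a b) (ha' : 0 < q a' b') (hj : jx a = jx a') :
    ubiReach q a a' := by
  classical
  set c : X → ℕ := ubiComp q with hc
  set d : Y → ℕ := fun v => if h : ∃ u, 0 < q u v then c h.choose else 0 with hd
  have hcd : IsCommonFn q c d := by
    intro x y hxy
    have hex : ∃ u, 0 < q u y := ⟨x, hxy⟩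
    rw [hd]
    simp only [dif_pos hex]
    exact ubiComp_eq (Relation.ReflTransGen.single ⟨y, hxy, hex.choose_spec⟩)
  obtain ⟨F, hF⟩ := hmax.2 c d hcd
  have : c a = c a' := by rw [hF a b ha, hF a' b' ha', hj]
  exact ubiReach_of_comp_eq this

section walk
variable {X Y Z : Type*} {n : ℕ} (p : X → Y → Z → ℝ) (z : Fin n → Z)
  (f' : (Fin n → X) → ℕ) (g' : (Fin n → Y) → ℕ)

/-- moving one coordinate along a path preserves `f'` and support positivity -/
lemma ubi_step_update
    (hcf : ∀ x y, (∀ i, 0 < p (x i) (y i) (z i)) → f' x = g' y)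
    (k : Fin n) (x : Fin n → X) (y : Fin n → Y)
    (hxy : ∀ i, 0 < p (x i) (y i) (z i)) {u : X}
    (hr : ubiReach (fun a b => p a b (z k)) (x k) u) :
    ∃ v, (∀ i, 0 < p (Function.update x k u i) (Function.update y k v i) (z i)) ∧
      f' (Function.update x k u) = f' x := by
  induction hr with
  | refl =>
      refine ⟨y k, ?_, by rw [Function.update_eq_self]⟩
      rw [Function.update_eq_self]
      intro i
      by_cases hik : i = k
      · subst hik; simpa using hxy i
      · simpa [Function.update_of_ne hik] using hxy i
  | tail hab hbc ih =>
      obtain ⟨v, hpos, hfeq⟩ := ih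
      rename_i b u'
      obtain ⟨w, hbw, huw⟩ := hbc
      have edge1 : ∀ i, 0 < p (Function.update x k b i) (Function.update y k w i) (z i) := by
        intro i
        by_cases hik : i = k
        · subst hik; simpa using hbw
        · simpa [Function.update_of_ne hik] using hxy i
      have edge2 : ∀ i, 0 < p (Function.update x k u' i) (Function.update y k w i) (z i) := by
        intro i
        by_cases hik : i = k
        · subst hik; simpa using huw
        · simpa [Function.update_of_ne hik] using hxy i
      refine ⟨w, edge2, ?_⟩
      calc f' (Function.update x k u') = g' (Function.update y k w) := hcf _ _ edge2
        _ = f' (Function.update x k b) := (hcf _ _ edge1).symm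
        _ = f' x := hfeq

/-- moving every coordinate along paths preserves `f'` -/
lemma ubi_walk
    (hcf : ∀ x y, (∀ i, 0 < p (x i) (y i) (z i)) → f' x = g' y)
    (x : Fin n → X) (y : Fin n → Y)
    (hxy : ∀ i, 0 < p (x i) (y i) (z i)) (x' : Fin n → X)
    (hr : ∀ k, ubiReach (fun a b => p a b (z k)) (x k) (x' k)) :
    f' x' = f' x := by
  classical
  have main : ∀ s : Finset (Fin n), ∃ y'' : Fin n → Y,
      (∀ i, 0 < p ((fun i => if i ∈ s then x' i else x i) i) (y'' i) (z i)) ∧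
      f' (fun i => if i ∈ s then x' i else x i) = f' x := by
    intro s
    induction s using Finset.induction_on with
    | empty => exact ⟨y, by simpa using hxy, by simp⟩
    | @insert k s hk ih =>
        obtain ⟨y'', hpos, hfe⟩ := ih
        set xs : Fin n → X := fun i => if i ∈ s then x' i else x i with hxs
        have hxsk : xs k = x k := by simp [hxs, hk]
        have hrk : ubiReach (fun a b => p a b (z k)) (xs k) (x' k) := by
          rw [hxsk]; exact hr k
        obtain ⟨v, hpos', hfeq'⟩ := ubi_step_update p z f' g' hcf k xs y'' hpos hrk
        have hupd : Function.update xs k (x' k) = fun i => if i ∈ insert k s then x' i else x i := by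
          funext i
          by_cases hik : i = k
          · subst hik; simp [Function.update_self]
          · simp [Function.update_of_ne hik, hxs, Finset.mem_insert, hik]
        rw [hupd] at hpos' hfeq'
        exact ⟨Function.update y'' k v, hpos', hfeq'.trans hfe⟩
  obtain ⟨y'', hpos, hfe⟩ := main Finset.univ
  simpa using hfe
end walk

/-- Uniform block independence is preserved under i.i.d. products: if `p_{XYZ}` is UBI
with maximal conditional common function `J`, then the `n`-fold product distribution is
UBI with maximal conditional common function the `n`-tuple of blockwise common functions,
and `H(J^{(n)}|Z^n) = n · H(J|Z)`. -/
theorem UBI_iid_product {X Y Z : Type*} [Fintype X] [Fintype Y] [Fintype Z]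
    [DecidableEq X] [DecidableEq Y] [DecidableEq Z]
    (p : X → Y → Z → ℝ) (hp0 : ∀ x y z, 0 ≤ p x y z)
    (hp1 : ∑ x, ∑ y, ∑ z, p x y z = 1)
    (jX : Z → X → ℕ) (jY : Z → Y → ℕ) (hubi : IsUBI p jX jY) (n : ℕ) :
    IsUBI (fun (x : Fin n → X) (y : Fin n → Y) (z : Fin n → Z) =>
        ∏ k, p (x k) (y k) (z k))
      (fun z x k => jX (z k) (x k)) (fun z y k => jY (z k) (y k)) ∧
    Hof (fun ω : (Fin n → X) × (Fin n → Y) × (Fin n → Z) =>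
          ∏ k, p (ω.1 k) (ω.2.1 k) (ω.2.2 k))
        (fun ω => (fun k => jX (ω.2.2 k) (ω.1 k), ω.2.2)) -
      Hof (fun ω : (Fin n → X) × (Fin n → Y) × (Fin n → Z) =>
          ∏ k, p (ω.1 k) (ω.2.1 k) (ω.2.2 k)) (fun ω => ω.2.2)
      = n * (Hof (fun ω : X × Y × Z => p ω.1 ω.2.1 ω.2.2)
              (fun ω => (jX ω.2.2 ω.1, ω.2.2)) -
             Hof (fun ω : X × Y × Z => p ω.1 ω.2.1 ω.2.2) (fun ω => ω.2.2)) := by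
  obtain ⟨hmaxs, hI, hJX, hJY⟩ := hubi
  have hq_pos : ∀ (x : Fin n → X) (y : Fin n → Y) (z : Fin n → Z),
      0 < (∏ k, p (x k) (y k) (z k)) → ∀ k, 0 < p (x k) (y k) (z k) := by
    intro x y z h k
    refine lt_of_le_of_ne (hp0 _ _ _) fun h0 => ?_
    rw [Finset.prod_eq_zero (Finset.mem_univ k) h0.symm] at h
    exact lt_irrefl 0 h
  have hmarg : ∀ {a b z0}, 0 < p a b z0 → 0 < ∑ x, ∑ y, p x y z0 := by
    intro a b z0 h
    refine Finset.sum_pos' (fun x _ => Finset.sum_nonneg fun y _ => hp0 _ _ _)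
      ⟨a, Finset.mem_univ a, ?_⟩
    exact Finset.sum_pos' (fun y _ => hp0 _ _ _) ⟨b, Finset.mem_univ b, h⟩
  refine ⟨⟨?_, ?_, ?_, ?_⟩, ?_⟩
  · -- maximal conditional common function of the product
    intro z hz
    constructor
    · intro x y hq
      funext k
      have hk := hq_pos x y z hq k
      exact (hmaxs (z k) (hmarg hk)).1 _ _ hk
    · intro f' g' hcf
      classical
      refine ⟨fun j => if h : ∃ x : Fin n → X,
          (∃ y : Fin n → Y, 0 < ∏ k, p (x k) (y k) (z k)) ∧ (fun k => jX (z k) (x k)) = j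
        then f' h.choose else 0, ?_⟩
      intro x y hq
      have hex : ∃ x0 : Fin n → X,
          (∃ y0 : Fin n → Y, 0 < ∏ k, p (x0 k) (y0 k) (z k)) ∧
          (fun k => jX (z k) (x0 k)) = (fun k => jX (z k) (x k)) := ⟨x, ⟨y, hq⟩, rfl⟩
      beta_reduce
      rw [dif_pos hex]
      obtain ⟨⟨y0, hq0⟩, hj0⟩ := hex.choose_spec
      have hxyk : ∀ i, 0 < p (x i) (y i) (z i) := hq_pos x y z hq
      have hx0k : ∀ i, 0 < p (hex.choose i) (y0 i) (z i) := hq_pos _ y0 z hq0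
      have hcf' : ∀ a b, (∀ i, 0 < p (a i) (b i) (z i)) → f' a = g' b := fun a b h =>
        hcf a b (Finset.prod_pos fun i _ => h i)
      have hreach : ∀ k, ubiReach (fun a b => p a b (z k)) (hex.choose k) (x k) := fun k =>
        ubiReach_of_max (hmaxs (z k) (hmarg (hx0k k))) (hx0k k) (hxyk k) (congrFun hj0 k)
      exact ubi_walk p z f' g' hcf' hex.choose y0 hx0k x hreach
  · -- I(X:Y|J,Z) = 0 for the product
    beta_reduce
    rw [Hof_key p hp0 hp1 n (fun ω : X × Y × Z => (ω.1, jX ω.2.2 ω.1, ω.2.2)) _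
        transpose3_inj (fun ω => (ω.1, fun k => jX (ω.2.2 k) (ω.1 k), ω.2.2)) (fun ω => rfl),
      Hof_key p hp0 hp1 n (fun ω : X × Y × Z => (ω.2.1, jX ω.2.2 ω.1, ω.2.2)) _
        transpose3_inj (fun ω => (ω.2.1, fun k => jX (ω.2.2 k) (ω.1 k), ω.2.2)) (fun ω => rfl),
      Hof_key p hp0 hp1 n (fun ω : X × Y × Z => (ω.1, ω.2.1, jX ω.2.2 ω.1, ω.2.2)) _
        transpose4_inj (fun ω => (ω.1, ω.2.1, fun k => jX (ω.2.2 k) (ω.1 k), ω.2.2)) (fun ω => rfl),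
      Hof_key p hp0 hp1 n (fun ω : X × Y × Z => (jX ω.2.2 ω.1, ω.2.2)) _
        transpose2_inj (fun ω => (fun k => jX (ω.2.2 k) (ω.1 k), ω.2.2)) (fun ω => rfl)]
    linear_combination (n : ℝ) * hI
  · -- H(J|X) = 0 for the product
    beta_reduce
    rw [Hof_key p hp0 hp1 n (fun ω : X × Y × Z => (jX ω.2.2 ω.1, ω.1)) _
        transpose2_inj (fun ω => (fun k => jX (ω.2.2 k) (ω.1 k), ω.1)) (fun ω => rfl),
      Hof_key p hp0 hp1 n (fun ω : X × Y × Z => ω.1) id Function.injective_id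
        (fun ω => ω.1) (fun ω => rfl)]
    linear_combination (n : ℝ) * hJX
  · -- H(J|Y) = 0 for the product
    beta_reduce
    rw [Hof_key p hp0 hp1 n (fun ω : X × Y × Z => (jY ω.2.2 ω.2.1, ω.2.1)) _
        transpose2_inj (fun ω => (fun k => jY (ω.2.2 k) (ω.2.1 k), ω.2.1)) (fun ω => rfl),
      Hof_key p hp0 hp1 n (fun ω : X × Y × Z => ω.2.1) id Function.injective_id
        (fun ω => ω.2.1) (fun ω => rfl)]
    linear_combination (n : ℝ) * hJY
  · -- H(J^n | Z^n) = n H(J|Z)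
    rw [Hof_key p hp0 hp1 n (fun ω : X × Y × Z => (jX ω.2.2 ω.1, ω.2.2)) _
        transpose2_inj (fun ω => (fun k => jX (ω.2.2 k) (ω.1 k), ω.2.2)) (fun ω => rfl),
      Hof_key p hp0 hp1 n (fun ω : X × Y × Z => ω.2.2) id Function.injective_id
        (fun ω => ω.2.2) (fun ω => rfl)]
    ring
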